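/- Let f be a continuous 2π-periodic real-valued function with modulus of continuity ω and let A = (a_{n,k}) be a lower triangular infinite matrix of real numbers satisfying: (i) a_{n,k} ≥ 0 and Σ_{k=0}^{n} a_{n,k} = 1 for every n; (ii) a_{n,k} ≥ a_{n,k+1} for k = 0,1,...,n−1 and all n. Suppose H : (0,π] → [0,∞) is such that ∫_u^π t^{-2} ω(t) dt = O(H(u)) as u → 0+ and ∫_0^t H(u) du = O(t·H(t)) as t → 0+. Then ‖T_{n,A}(f) − f‖_∞ = O(a_{n,0}·H(a_{n,0})), with the implied constant independent of n. -/

import Mathlib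

open Real MeasureTheory

/-- The `k`-th partial sum of the (trigonometric) Fourier series of `f` at `x`. -/
noncomputable def fourierPartialSum (f : ℝ → ℝ) (k : ℕ) (x : ℝ) : ℝ :=
  (1 / (2 * Real.pi)) * (∫ t in (-Real.pi)..Real.pi, f t) +
    ∑ j ∈ Finset.Icc 1 k,
      ((1 / Real.pi) * (∫ t in (-Real.pi)..Real.pi, f t * Real.cos (j * t)) * Real.cos (j * x) +
        (1 / Real.pi) * (∫ t in (-Real.pi)..Real.pi, f t * Real.sin (j * t)) * Real.sin (j * x))

/-- The `A`-transform `T_{n,A}(f;x) = ∑_{k=0}^n a_{n,k} S_k(f;x)`. -/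
noncomputable def matrixTransform (a : ℕ → ℕ → ℝ) (f : ℝ → ℝ) (n : ℕ) (x : ℝ) : ℝ :=
  ∑ k ∈ Finset.range (n + 1), a n k * fourierPartialSum f k x

/-- The modulus of continuity `ω(δ,f)`. -/
noncomputable def modulusOfContinuity (f : ℝ → ℝ) (δ : ℝ) : ℝ :=
  sSup {y : ℝ | ∃ x t : ℝ, |t| ≤ δ ∧ y = |f (x + t) - f x|}

namespace ChandraAux

/-- The Dirichlet kernel `D_k(t) = 1/2 + ∑_{j=1}^k cos (j t)`. -/
noncomputable def Dker (k : ℕ) (t : ℝ) : ℝ :=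
  1 / 2 + ∑ j ∈ Finset.Icc 1 k, Real.cos (j * t)

lemma Dker_continuous (k : ℕ) : Continuous (Dker k) := by
  unfold Dker
  exact continuous_const.add (continuous_finset_sum _ fun j _ =>
    Real.continuous_cos.comp (continuous_const.mul continuous_id))

lemma Dker_even (k : ℕ) (t : ℝ) : Dker k (-t) = Dker k t := by
  unfold Dker
  congr 1
  exact Finset.sum_congr rfl fun j _ => by rw [mul_neg, Real.cos_neg]

lemma Dker_periodic (k : ℕ) : Function.Periodic (Dker k) (2 * Real.pi) := by
  intro t
  unfold Dker
  congr 1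
  refine Finset.sum_congr rfl fun j _ => ?_
  have h : (j : ℝ) * (t + 2 * Real.pi) = (j : ℝ) * t + (j : ℤ) * (2 * Real.pi) := by
    push_cast; ring
  rw [h, Real.cos_add_int_mul_two_pi]

lemma two_sin_mul_Dker (k : ℕ) (t : ℝ) :
    2 * Real.sin (t / 2) * Dker k t = Real.sin (((k : ℝ) + 1 / 2) * t) := by
  induction k with
  | zero =>
    have : ((0 : ℕ) : ℝ) + 1 / 2 = 1 / 2 := by norm_num
    rw [this]
    unfold Dker
    norm_num
    rw [show (1 / 2 : ℝ) * t = t / 2 by ring]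
    ring
  | succ k ih =>
    have h : Dker (k + 1) t = Dker k t + Real.cos ((k + 1 : ℕ) * t) := by
      unfold Dker
      rw [Finset.sum_Icc_succ_top (by omega : 1 ≤ k + 1)]
      ring
    rw [h, mul_add, ih]
    have key : Real.sin (((k : ℝ) + 1 + 1 / 2) * t) - Real.sin (((k : ℝ) + 1 / 2) * t)
        = 2 * Real.sin (t / 2) * Real.cos (((k : ℝ) + 1) * t) := by
      rw [Real.sin_sub_sin]
      rw [show (((k : ℝ) + 1 + 1 / 2) * t - ((k : ℝ) + 1 / 2) * t) / 2 = t / 2 by ring]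
      rw [show (((k : ℝ) + 1 + 1 / 2) * t + ((k : ℝ) + 1 / 2) * t) / 2 = ((k : ℝ) + 1) * t by ring]
    push_cast
    push_cast at key
    linarith

lemma two_sin_mul_sin (j : ℕ) (t : ℝ) :
    2 * Real.sin (t / 2) * Real.sin (((j : ℝ) + 1 / 2) * t)
      = Real.cos ((j : ℝ) * t) - Real.cos (((j : ℝ) + 1) * t) := by
  rw [Real.cos_sub_cos]
  rw [show ((j : ℝ) * t + ((j : ℝ) + 1) * t) / 2 = ((j : ℝ) + 1 / 2) * t by ring]
  rw [show ((j : ℝ) * t - ((j : ℝ) + 1) * t) / 2 = -(t / 2) by ring]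
  rw [Real.sin_neg]
  ring

lemma sum_sin_eq (m : ℕ) (t : ℝ) :
    ∑ j ∈ Finset.range (m + 1), 2 * Real.sin (t / 2) * Real.sin (((j : ℝ) + 1 / 2) * t)
      = 1 - Real.cos (((m : ℝ) + 1) * t) := by
  have h : ∀ j ∈ Finset.range (m + 1),
      2 * Real.sin (t / 2) * Real.sin (((j : ℝ) + 1 / 2) * t)
        = Real.cos ((j : ℝ) * t) - Real.cos (((j + 1 : ℕ) : ℝ) * t) := by
    intro j _
    rw [two_sin_mul_sin]
    push_cast
    ring_nf
  rw [Finset.sum_congr rfl h, Finset.sum_range_sub' (fun j : ℕ => Real.cos ((j : ℝ) * t))]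
  push_cast
  norm_num

lemma sum_Dker_nonneg (k : ℕ) (t : ℝ) :
    0 ≤ ∑ j ∈ Finset.range (k + 1), Dker j t := by
  rcases eq_or_ne (Real.sin (t / 2)) 0 with hs | hs
  · obtain ⟨m, hm⟩ := Real.sin_eq_zero_iff.mp hs
    have ht : t = (m : ℝ) * (2 * Real.pi) := by linarith
    refine Finset.sum_nonneg fun j _ => ?_
    unfold Dker
    have hcos : ∀ i ∈ Finset.Icc 1 j, Real.cos ((i : ℝ) * t) = 1 := by
      intro i _
      rw [ht, show (i : ℝ) * ((m : ℝ) * (2 * Real.pi)) = 0 + ((i * m : ℤ) : ℝ) * (2 * Real.pi)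
        by push_cast; ring, Real.cos_add_int_mul_two_pi, Real.cos_zero]
    rw [Finset.sum_congr rfl hcos, Finset.sum_const, nsmul_eq_mul, mul_one]
    positivity
  · have hs2 : 0 < (2 * Real.sin (t / 2)) ^ 2 :=
      lt_of_le_of_ne (sq_nonneg _) (Ne.symm (pow_ne_zero 2 (mul_ne_zero two_ne_zero hs)))
    have hkey : (2 * Real.sin (t / 2)) ^ 2 * ∑ j ∈ Finset.range (k + 1), Dker j t
        = 1 - Real.cos (((k : ℝ) + 1) * t) := by
      rw [Finset.mul_sum]
      have h1 : ∀ j ∈ Finset.range (k + 1),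
          (2 * Real.sin (t / 2)) ^ 2 * Dker j t
            = 2 * Real.sin (t / 2) * Real.sin (((j : ℝ) + 1 / 2) * t) := by
        intro j _
        have h2 := two_sin_mul_Dker j t
        calc (2 * Real.sin (t / 2)) ^ 2 * Dker j t
            = 2 * Real.sin (t / 2) * (2 * Real.sin (t / 2) * Dker j t) := by ring
          _ = 2 * Real.sin (t / 2) * Real.sin (((j : ℝ) + 1 / 2) * t) := by rw [h2]
      rw [Finset.sum_congr rfl h1, sum_sin_eq]
    have h1 : Real.cos (((k : ℝ) + 1) * t) ≤ 1 := Real.cos_le_one _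
    by_contra hE
    push_neg at hE
    nlinarith [mul_neg_of_pos_of_neg hs2 hE]

lemma abel_sum (b c : ℕ → ℝ) (n : ℕ) :
    ∑ k ∈ Finset.range (n + 1), b k * c k
      = ∑ k ∈ Finset.range n, (b k - b (k + 1)) * (∑ j ∈ Finset.range (k + 1), c j)
        + b n * ∑ j ∈ Finset.range (n + 1), c j := by
  induction n with
  | zero => simp
  | succ n ih =>
    rw [Finset.sum_range_succ (f := fun k => b k * c k), ih,
      Finset.sum_range_succ (f := fun k => (b k - b (k + 1)) * ∑ j ∈ Finset.range (k + 1), c j),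
      Finset.sum_range_succ (f := c) (n + 1)]
    ring

/-- The summability kernel `L_n(t) = ∑_{k=0}^n a_{n,k} D_k(t)`. -/
noncomputable def Lker (a : ℕ → ℕ → ℝ) (n : ℕ) (t : ℝ) : ℝ :=
  ∑ k ∈ Finset.range (n + 1), a n k * Dker k t

lemma Lker_continuous (a : ℕ → ℕ → ℝ) (n : ℕ) : Continuous (Lker a n) :=
  continuous_finset_sum _ fun k _ => continuous_const.mul (Dker_continuous k)

lemma Lker_even (a : ℕ → ℕ → ℝ) (n : ℕ) (t : ℝ) : Lker a n (-t) = Lker a n t :=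
  Finset.sum_congr rfl fun k _ => by rw [Dker_even]

lemma Lker_nonneg (a : ℕ → ℕ → ℝ)
    (hnn : ∀ n k : ℕ, 0 ≤ a n k)
    (hmono : ∀ n : ℕ, ∀ k : ℕ, k < n → a n (k + 1) ≤ a n k)
    (n : ℕ) (t : ℝ) : 0 ≤ Lker a n t := by
  unfold Lker
  rw [abel_sum]
  refine add_nonneg (Finset.sum_nonneg fun k hk => mul_nonneg ?_ (sum_Dker_nonneg k t))
    (mul_nonneg (hnn n n) (sum_Dker_nonneg n t))
  exact sub_nonneg.mpr (hmono n k (Finset.mem_range.mp hk))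

lemma Lker_le (a : ℕ → ℕ → ℝ)
    (hnn : ∀ n k : ℕ, 0 ≤ a n k)
    (hmono : ∀ n : ℕ, ∀ k : ℕ, k < n → a n (k + 1) ≤ a n k)
    (n : ℕ) {t : ℝ} (ht0 : 0 < t) (htpi : t ≤ Real.pi) :
    Lker a n t ≤ a n 0 * Real.pi ^ 2 / (2 * t ^ 2) := by
  have hs0 : 0 < Real.sin (t / 2) :=
    Real.sin_pos_of_pos_of_lt_pi (by linarith) (by nlinarith [Real.pi_pos])
  have hsl : t / Real.pi ≤ Real.sin (t / 2) := by
    have h := Real.mul_le_sin (x := t / 2) (by linarith) (by linarith)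
    calc t / Real.pi = 2 / Real.pi * (t / 2) := by field_simp
      _ ≤ _ := h
  -- partial sums of sines are bounded by 1 / sin (t/2)
  have hP : ∀ k : ℕ, ∑ j ∈ Finset.range (k + 1), Real.sin (((j : ℝ) + 1 / 2) * t)
      ≤ 1 / Real.sin (t / 2) := by
    intro k
    have h1 : 2 * Real.sin (t / 2) * ∑ j ∈ Finset.range (k + 1),
        Real.sin (((j : ℝ) + 1 / 2) * t) = 1 - Real.cos (((k : ℝ) + 1) * t) := by
      rw [Finset.mul_sum]
      exact sum_sin_eq k t
    have h2 : 1 - Real.cos (((k : ℝ) + 1) * t) ≤ 2 := by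
      nlinarith [Real.neg_one_le_cos (((k : ℝ) + 1) * t)]
    rw [le_div_iff₀ hs0]
    nlinarith
  have h2 : 2 * Real.sin (t / 2) * Lker a n t
      = ∑ k ∈ Finset.range (n + 1), a n k * Real.sin (((k : ℝ) + 1 / 2) * t) := by
    unfold Lker
    rw [Finset.mul_sum]
    refine Finset.sum_congr rfl fun k _ => ?_
    rw [← two_sin_mul_Dker]
    ring
  rw [abel_sum] at h2
  have h3 : 2 * Real.sin (t / 2) * Lker a n t ≤ a n 0 * (1 / Real.sin (t / 2)) := by
    rw [h2]
    have hb1 : ∑ k ∈ Finset.range n, (a n k - a n (k + 1)) *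
          (∑ j ∈ Finset.range (k + 1), Real.sin (((j : ℝ) + 1 / 2) * t))
        ≤ ∑ k ∈ Finset.range n, (a n k - a n (k + 1)) * (1 / Real.sin (t / 2)) := by
      refine Finset.sum_le_sum fun k hk => ?_
      exact mul_le_mul_of_nonneg_left (hP k)
        (sub_nonneg.mpr (hmono n k (Finset.mem_range.mp hk)))
    have hb2 : a n n * (∑ j ∈ Finset.range (n + 1), Real.sin (((j : ℝ) + 1 / 2) * t))
        ≤ a n n * (1 / Real.sin (t / 2)) :=
      mul_le_mul_of_nonneg_left (hP n) (hnn n n)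
    have htel : ∑ k ∈ Finset.range n, (a n k - a n (k + 1)) = a n 0 - a n n :=
      Finset.sum_range_sub' (fun k => a n k) n
    calc _ ≤ ∑ k ∈ Finset.range n, (a n k - a n (k + 1)) * (1 / Real.sin (t / 2))
          + a n n * (1 / Real.sin (t / 2)) := add_le_add hb1 hb2
      _ = (a n 0 - a n n) * (1 / Real.sin (t / 2)) + a n n * (1 / Real.sin (t / 2)) := by
          rw [← Finset.sum_mul, htel]
      _ = a n 0 * (1 / Real.sin (t / 2)) := by ring
  -- from h3 : 2 s L ≤ a0 / s, with s ≥ t/π > 0, conclude L ≤ a0 π² / (2 t²)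
  have hL0 : 0 ≤ Lker a n t := Lker_nonneg a hnn hmono n t
  have hpi : 0 < Real.pi := Real.pi_pos
  have hs2 : t ^ 2 / Real.pi ^ 2 ≤ Real.sin (t / 2) ^ 2 := by
    have := mul_le_mul hsl hsl (by positivity) hs0.le
    calc t ^ 2 / Real.pi ^ 2 = t / Real.pi * (t / Real.pi) := by ring
      _ ≤ _ := this.trans_eq (sq (Real.sin (t / 2))).symm
  have key : 2 * (t ^ 2 / Real.pi ^ 2) * Lker a n t ≤ a n 0 := by
    have h4 : 2 * Real.sin (t / 2) ^ 2 * Lker a n t ≤ a n 0 := by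
      have := mul_le_mul_of_nonneg_left h3 hs0.le
      calc 2 * Real.sin (t / 2) ^ 2 * Lker a n t
          = Real.sin (t / 2) * (2 * Real.sin (t / 2) * Lker a n t) := by ring
        _ ≤ Real.sin (t / 2) * (a n 0 * (1 / Real.sin (t / 2))) := this
        _ = a n 0 := by field_simp
    nlinarith [mul_le_mul_of_nonneg_right hs2 hL0]
  have h5 : t ^ 2 ≤ Real.sin (t / 2) ^ 2 * Real.pi ^ 2 := by
    rw [div_le_iff₀ (by positivity)] at hs2
    linarith
  have h4 : 2 * Real.sin (t / 2) ^ 2 * Lker a n t ≤ a n 0 := by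
    have := mul_le_mul_of_nonneg_left h3 hs0.le
    calc 2 * Real.sin (t / 2) ^ 2 * Lker a n t
        = Real.sin (t / 2) * (2 * Real.sin (t / 2) * Lker a n t) := by ring
      _ ≤ Real.sin (t / 2) * (a n 0 * (1 / Real.sin (t / 2))) := this
      _ = a n 0 := by field_simp
  rw [le_div_iff₀ (by positivity : (0:ℝ) < 2 * t ^ 2)]
  calc Lker a n t * (2 * t ^ 2)
      ≤ Lker a n t * (2 * (Real.sin (t / 2) ^ 2 * Real.pi ^ 2)) := by gcongr
    _ = 2 * Real.sin (t / 2) ^ 2 * Lker a n t * Real.pi ^ 2 := by ring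
    _ ≤ a n 0 * Real.pi ^ 2 := mul_le_mul_of_nonneg_right h4 (sq_nonneg _)

lemma integral_Dker (k : ℕ) : ∫ t in (0:ℝ)..Real.pi, Dker k t = Real.pi / 2 := by
  unfold Dker
  have h1 : IntervalIntegrable (fun _ : ℝ => (1:ℝ)/2) volume 0 Real.pi :=
    intervalIntegrable_const
  have hc : ∀ j : ℕ, Continuous fun t : ℝ => Real.cos ((j : ℝ) * t) := fun j =>
    Real.continuous_cos.comp (continuous_const.mul continuous_id)
  have h2 : IntervalIntegrable (fun t : ℝ => ∑ j ∈ Finset.Icc 1 k, Real.cos ((j : ℝ) * t))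
      volume 0 Real.pi :=
    Continuous.intervalIntegrable (continuous_finset_sum _ fun j _ => hc j) _ _
  rw [intervalIntegral.integral_add h1 h2]
  rw [intervalIntegral.integral_finset_sum (fun j _ =>
    Continuous.intervalIntegrable (hc j) _ _)]
  have hz : ∀ j ∈ Finset.Icc 1 k, (∫ t in (0:ℝ)..Real.pi, Real.cos ((j : ℝ) * t)) = 0 := by
    intro j hj
    have hj0 : (j : ℝ) ≠ 0 := by
      have := (Finset.mem_Icc.mp hj).1
      positivity
    rw [intervalIntegral.integral_comp_mul_left (fun x => Real.cos x) hj0]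
    simp [integral_cos, Real.sin_nat_mul_pi]
  rw [Finset.sum_congr rfl hz]
  simp
  ring

lemma integral_Lker (a : ℕ → ℕ → ℝ)
    (hrow : ∀ n : ℕ, ∑ k ∈ Finset.range (n + 1), a n k = 1) (n : ℕ) :
    ∫ t in (0:ℝ)..Real.pi, Lker a n t = Real.pi / 2 := by
  unfold Lker
  rw [intervalIntegral.integral_finset_sum (fun k _ => Continuous.intervalIntegrable
    (show Continuous fun t => a n k * Dker k t from continuous_const.mul (Dker_continuous k)) _ _)]
  have h : ∀ k ∈ Finset.range (n + 1),
      (∫ t in (0:ℝ)..Real.pi, a n k * Dker k t) = a n k * (Real.pi / 2) := by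
    intro k _
    rw [intervalIntegral.integral_const_mul, integral_Dker]
  rw [Finset.sum_congr rfl h, ← Finset.sum_mul, hrow, one_mul]

lemma integral_Lker_full (a : ℕ → ℕ → ℝ)
    (hrow : ∀ n : ℕ, ∑ k ∈ Finset.range (n + 1), a n k = 1) (n : ℕ) :
    ∫ t in (-Real.pi)..Real.pi, Lker a n t = Real.pi := by
  have hint : ∀ u v : ℝ, IntervalIntegrable (Lker a n) volume u v :=
    fun u v => (Lker_continuous a n).intervalIntegrable u v
  have hsplit : ∫ t in (-Real.pi)..Real.pi, Lker a n t
      = (∫ t in (-Real.pi)..(0:ℝ), Lker a n t) + ∫ t in (0:ℝ)..Real.pi, Lker a n t :=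
    (intervalIntegral.integral_add_adjacent_intervals (hint _ _) (hint _ _)).symm
  have hneg : ∫ t in (-Real.pi)..(0:ℝ), Lker a n t = ∫ t in (0:ℝ)..Real.pi, Lker a n t := by
    have := intervalIntegral.integral_comp_neg (a := (0:ℝ)) (b := Real.pi) (Lker a n)
    simp only [neg_zero] at this
    rw [← this]
    refine intervalIntegral.integral_congr fun t _ => ?_
    exact Lker_even a n t
  rw [hsplit, hneg, integral_Lker a hrow]
  ring

section MOC

variable {f : ℝ → ℝ} {M : ℝ}

lemma moc_bddAbove (hM : ∀ y, |f y| ≤ M) (δ : ℝ) :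
    BddAbove {y : ℝ | ∃ x t : ℝ, |t| ≤ δ ∧ y = |f (x + t) - f x|} := by
  refine ⟨2 * M, fun y hy => ?_⟩
  obtain ⟨x, t, -, rfl⟩ := hy
  have h := abs_add_le (f (x + t)) (-f x)
  rw [abs_neg] at h
  rw [show f (x + t) - f x = f (x + t) + -f x by ring]
  linarith [hM (x + t), hM x]

lemma moc_mem {δ : ℝ} (hδ : 0 ≤ δ) :
    (0 : ℝ) ∈ {y : ℝ | ∃ x t : ℝ, |t| ≤ δ ∧ y = |f (x + t) - f x|} :=
  ⟨0, 0, by simpa using hδ, by simp⟩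

lemma moc_nonneg (hM : ∀ y, |f y| ≤ M) {δ : ℝ} (hδ : 0 ≤ δ) :
    0 ≤ modulusOfContinuity f δ :=
  le_csSup (moc_bddAbove hM δ) (moc_mem hδ)

lemma moc_le (hM : ∀ y, |f y| ≤ M) (x t : ℝ) :
    |f (x + t) - f x| ≤ modulusOfContinuity f |t| :=
  le_csSup (moc_bddAbove hM |t|) ⟨x, t, le_refl _, rfl⟩

lemma moc_mono (hM : ∀ y, |f y| ≤ M) : Monotone (modulusOfContinuity f) := by
  intro d₁ d₂ h
  rcases lt_or_ge d₁ 0 with h1 | h1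
  · have hemp : {y : ℝ | ∃ x t : ℝ, |t| ≤ d₁ ∧ y = |f (x + t) - f x|} = ∅ := by
      ext y
      simp only [Set.mem_setOf_eq, Set.mem_empty_iff_false, iff_false]
      rintro ⟨x, t, ht, -⟩
      linarith [abs_nonneg t]
    rw [modulusOfContinuity, hemp, Real.sSup_empty]
    rcases lt_or_ge d₂ 0 with h2 | h2
    · have hemp2 : {y : ℝ | ∃ x t : ℝ, |t| ≤ d₂ ∧ y = |f (x + t) - f x|} = ∅ := by
        ext y
        simp only [Set.mem_setOf_eq, Set.mem_empty_iff_false, iff_false]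
        rintro ⟨x, t, ht, -⟩
        linarith [abs_nonneg t]
      rw [modulusOfContinuity, hemp2, Real.sSup_empty]
    · exact moc_nonneg hM h2
  · exact csSup_le_csSup (moc_bddAbove hM d₂) ⟨0, moc_mem h1⟩
      (fun y ⟨x, t, ht, hy⟩ => ⟨x, t, ht.trans h, hy⟩)

end MOC

section Repr

variable {f : ℝ → ℝ}

lemma fourier_repr (hf : Continuous f) (hper : Function.Periodic f (2 * Real.pi))
    (k : ℕ) (x : ℝ) :
    fourierPartialSum f k x = (1 / Real.pi) * ∫ t in (-Real.pi)..Real.pi, f (x + t) * Dker k t := by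
  have hB : (∫ t in (-Real.pi)..Real.pi, f t * Dker k (t - x))
      = ∫ t in (-Real.pi)..Real.pi, f (x + t) * Dker k t := by
    have hgper : Function.Periodic (fun u => f (x + u) * Dker k u) (2 * Real.pi) := by
      intro u
      show f (x + (u + 2 * Real.pi)) * Dker k (u + 2 * Real.pi) = f (x + u) * Dker k u
      rw [show x + (u + 2 * Real.pi) = (x + u) + 2 * Real.pi by ring, hper (x + u),
        Dker_periodic k u]
    have hsub : (∫ t in (-Real.pi)..Real.pi, f t * Dker k (t - x))
        = ∫ u in (-Real.pi - x)..(Real.pi - x), f (x + u) * Dker k u := by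
      rw [← intervalIntegral.integral_comp_sub_right (fun u => f (x + u) * Dker k u) x]
      refine intervalIntegral.integral_congr fun t _ => ?_
      show f t * Dker k (t - x) = f (x + (t - x)) * Dker k (t - x)
      rw [show x + (t - x) = t by ring]
    rw [hsub]
    calc ∫ u in (-Real.pi - x)..(Real.pi - x), f (x + u) * Dker k u
        = ∫ u in (-Real.pi - x)..((-Real.pi - x) + 2 * Real.pi), f (x + u) * Dker k u := by
          rw [show (-Real.pi - x) + 2 * Real.pi = Real.pi - x by ring]
      _ = ∫ u in (-Real.pi)..((-Real.pi) + 2 * Real.pi), f (x + u) * Dker k u :=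
          hgper.intervalIntegral_add_eq _ _
      _ = ∫ u in (-Real.pi)..Real.pi, f (x + u) * Dker k u := by
          rw [show (-Real.pi) + 2 * Real.pi = Real.pi by ring]
  have hI : (∫ t in (-Real.pi)..Real.pi, f t * Dker k (t - x))
      = (∫ t in (-Real.pi)..Real.pi, f t) * (1 / 2)
        + ∑ j ∈ Finset.Icc 1 k,
          ((∫ t in (-Real.pi)..Real.pi, f t * Real.cos ((j : ℝ) * t)) * Real.cos ((j : ℝ) * x)
            + (∫ t in (-Real.pi)..Real.pi, f t * Real.sin ((j : ℝ) * t)) * Real.sin ((j : ℝ) * x)) := by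
    have h1 : ∀ t : ℝ, f t * Dker k (t - x) = f t * (1 / 2)
        + ∑ j ∈ Finset.Icc 1 k,
          (f t * Real.cos ((j : ℝ) * t) * Real.cos ((j : ℝ) * x)
            + f t * Real.sin ((j : ℝ) * t) * Real.sin ((j : ℝ) * x)) := by
      intro t
      unfold Dker
      rw [mul_add, Finset.mul_sum]
      congr 1
      refine Finset.sum_congr rfl fun j _ => ?_
      rw [show (j : ℝ) * (t - x) = (j : ℝ) * t - (j : ℝ) * x by ring, Real.cos_sub]
      ring
    have hc1 : Continuous fun t : ℝ => f t * (1 / 2 : ℝ) := hf.mul continuous_const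
    have hcj : ∀ j : ℕ, Continuous fun t : ℝ =>
        f t * Real.cos ((j : ℝ) * t) * Real.cos ((j : ℝ) * x)
          + f t * Real.sin ((j : ℝ) * t) * Real.sin ((j : ℝ) * x) := by
      intro j
      apply Continuous.add
      · exact (hf.mul (Real.continuous_cos.comp (continuous_const.mul continuous_id))).mul
          continuous_const
      · exact (hf.mul (Real.continuous_sin.comp (continuous_const.mul continuous_id))).mul
          continuous_const
    have hstep : (∫ t in (-Real.pi)..Real.pi, f t * Dker k (t - x))
        = (∫ t in (-Real.pi)..Real.pi, f t * (1 / 2 : ℝ))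
          + ∑ j ∈ Finset.Icc 1 k, ∫ t in (-Real.pi)..Real.pi,
            (f t * Real.cos ((j : ℝ) * t) * Real.cos ((j : ℝ) * x)
              + f t * Real.sin ((j : ℝ) * t) * Real.sin ((j : ℝ) * x)) := by
      rw [intervalIntegral.integral_congr (fun t _ => h1 t)]
      rw [intervalIntegral.integral_add (hc1.intervalIntegrable _ _)
        ((continuous_finset_sum _ fun j _ => hcj j).intervalIntegrable _ _)]
      rw [intervalIntegral.integral_finset_sum (fun j _ => (hcj j).intervalIntegrable _ _)]
    rw [hstep, intervalIntegral.integral_mul_const]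
    congr 1
    refine Finset.sum_congr rfl fun j _ => ?_
    have hca : Continuous fun t : ℝ => f t * Real.cos ((j : ℝ) * t) * Real.cos ((j : ℝ) * x) :=
      (hf.mul (Real.continuous_cos.comp (continuous_const.mul continuous_id))).mul
        continuous_const
    have hcb : Continuous fun t : ℝ => f t * Real.sin ((j : ℝ) * t) * Real.sin ((j : ℝ) * x) :=
      (hf.mul (Real.continuous_sin.comp (continuous_const.mul continuous_id))).mul
        continuous_const
    rw [intervalIntegral.integral_add (hca.intervalIntegrable _ _) (hcb.intervalIntegrable _ _),
      intervalIntegral.integral_mul_const, intervalIntegral.integral_mul_const]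
  rw [← hB, hI]
  unfold fourierPartialSum
  rw [mul_add, Finset.mul_sum]
  congr 1
  · ring
  · exact Finset.sum_congr rfl fun j _ => by ring

lemma transform_repr (hf : Continuous f) (hper : Function.Periodic f (2 * Real.pi))
    (a : ℕ → ℕ → ℝ) (hrow : ∀ n : ℕ, ∑ k ∈ Finset.range (n + 1), a n k = 1)
    (n : ℕ) (x : ℝ) :
    matrixTransform a f n x - f x
      = (1 / Real.pi) * ∫ t in (-Real.pi)..Real.pi, (f (x + t) - f x) * Lker a n t := by
  have hπ := Real.pi_pos
  have h1 : matrixTransform a f n x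
      = (1 / Real.pi) * ∫ t in (-Real.pi)..Real.pi, f (x + t) * Lker a n t := by
    unfold matrixTransform
    have h2 : ∀ k ∈ Finset.range (n + 1), a n k * fourierPartialSum f k x
        = (1 / Real.pi) * ∫ t in (-Real.pi)..Real.pi, a n k * (f (x + t) * Dker k t) := by
      intro k _
      rw [fourier_repr hf hper k x, intervalIntegral.integral_const_mul]
      ring
    rw [Finset.sum_congr rfl h2, ← Finset.mul_sum]
    congr 1
    have hfx : Continuous fun t : ℝ => f (x + t) := by fun_prop
    rw [← intervalIntegral.integral_finset_sum (fun k _ =>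
      ((show Continuous fun t => a n k * (f (x + t) * Dker k t) from
        continuous_const.mul (hfx.mul (Dker_continuous k))).intervalIntegrable _ _))]
    refine intervalIntegral.integral_congr fun t _ => ?_
    simp only [Lker, Finset.mul_sum]
    exact Finset.sum_congr rfl fun k _ => by ring
  have h2 : f x = (1 / Real.pi) * ∫ t in (-Real.pi)..Real.pi, f x * Lker a n t := by
    rw [intervalIntegral.integral_const_mul, integral_Lker_full a hrow]
    field_simp
  have hfx : Continuous fun t : ℝ => f (x + t) := by fun_prop
  have hsub : (∫ t in (-Real.pi)..Real.pi, (f (x + t) - f x) * Lker a n t)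
      = (∫ t in (-Real.pi)..Real.pi, f (x + t) * Lker a n t)
        - ∫ t in (-Real.pi)..Real.pi, f x * Lker a n t := by
    rw [← intervalIntegral.integral_sub
      ((show Continuous fun t => f (x + t) * Lker a n t from
        hfx.mul (Lker_continuous a n)).intervalIntegrable _ _)
      ((show Continuous fun t => f x * Lker a n t from
        continuous_const.mul (Lker_continuous a n)).intervalIntegrable _ _)]
    exact intervalIntegral.integral_congr fun t _ => by ring
  rw [h1, hsub, intervalIntegral.integral_const_mul, integral_Lker_full a hrow, mul_sub]
  congr 1
  field_simp

end Repr

end ChandraAux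

open ChandraAux in
theorem chandra_monotone_decreasing_an0
    (f : ℝ → ℝ) (hf : Continuous f) (hper : Function.Periodic f (2 * Real.pi))
    (a : ℕ → ℕ → ℝ) (htri : ∀ n k : ℕ, n < k → a n k = 0)
    (hnn : ∀ n k : ℕ, 0 ≤ a n k)
    (hrow : ∀ n : ℕ, ∑ k ∈ Finset.range (n + 1), a n k = 1)
    (hmono : ∀ n : ℕ, ∀ k : ℕ, k < n → a n (k + 1) ≤ a n k)
    (H : ℝ → ℝ) (hHnn : ∀ u : ℝ, 0 < u → u ≤ Real.pi → 0 ≤ H u)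
    (C₁ : ℝ) (hC₁ : 0 < C₁)
    (hint₁ : ∀ u : ℝ, 0 < u → u ≤ Real.pi →
      ∫ t in u..Real.pi, modulusOfContinuity f t / t ^ 2 ≤ C₁ * H u)
    (C₂ : ℝ) (hC₂ : 0 < C₂)
    (hint₂ : ∀ t : ℝ, 0 < t → t ≤ Real.pi →
      ∫ u in (0 : ℝ)..t, H u ≤ C₂ * (t * H t))
    :
    ∃ C' : ℝ, 0 < C' ∧ ∀ (n : ℕ) (x : ℝ),
      |matrixTransform a f n x - f x| ≤ C' * (a n 0 * H (a n 0)) := by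
  have hπ : (0:ℝ) < Real.pi := Real.pi_pos
  have hπ3 : (3:ℝ) < Real.pi := Real.pi_gt_three
  have hπ1 : (0:ℝ) < Real.pi - 1 := by linarith
  -- boundedness of f
  obtain ⟨M, hM⟩ : ∃ M : ℝ, ∀ y : ℝ, |f y| ≤ M := by
    obtain ⟨M, hM⟩ := (isCompact_Icc (a := (0:ℝ)) (b := 2 * Real.pi)).exists_bound_of_continuousOn
      hf.continuousOn
    refine ⟨M, fun y => ?_⟩
    obtain ⟨z, hz, hfz⟩ := hper.exists_mem_Ico₀ Real.two_pi_pos y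
    rw [hfz]
    exact hM z ⟨hz.1, hz.2.le⟩
  have hωmono : Monotone (modulusOfContinuity f) := moc_mono hM
  have hωnn : ∀ δ : ℝ, 0 ≤ δ → 0 ≤ modulusOfContinuity f δ := fun δ hδ => moc_nonneg hM hδ
  refine ⟨C₁ * (Real.pi / (Real.pi - 1) + Real.pi), by positivity, fun n x => ?_⟩
  -- facts about a n 0
  have hAle : ∀ k, k ≤ n → a n k ≤ a n 0 := by
    intro k hk
    induction k with
    | zero => exact le_refl _
    | succ k ih => exact le_trans (hmono n k (by omega)) (ih (by omega))
  have hA1 : a n 0 ≤ 1 := by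
    rw [← hrow n]
    exact Finset.single_le_sum (f := fun k => a n k) (fun k _ => hnn n k)
      (Finset.mem_range.mpr (by omega))
  have hA0 : 0 < a n 0 := by
    rcases lt_or_ge 0 (a n 0) with h | h
    · exact h
    · exfalso
      have hz : ∑ k ∈ Finset.range (n + 1), a n k ≤ 0 :=
        Finset.sum_nonpos fun k hk =>
          le_trans (hAle k (Nat.lt_succ_iff.mp (Finset.mem_range.mp hk))) h
      rw [hrow n] at hz; linarith
  have hAπ : a n 0 ≤ Real.pi := by linarith
  -- kernel facts
  have hLc : Continuous (Lker a n) := Lker_continuous a n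
  have hLnn : ∀ t, 0 ≤ Lker a n t := Lker_nonneg a hnn hmono n
  have hωint : ∀ u v : ℝ, IntervalIntegrable (modulusOfContinuity f) volume u v :=
    fun u v => hωmono.intervalIntegrable
  have hωLint : ∀ u v : ℝ, IntervalIntegrable
      (fun t => modulusOfContinuity f t * Lker a n t) volume u v :=
    fun u v => (hωint u v).mul_continuousOn hLc.continuousOn
  -- representation and symmetrization
  rw [transform_repr hf hper a hrow n x]
  set g : ℝ → ℝ := fun t => (f (x + t) - f x) * Lker a n t with hg_def
  have hgc : Continuous g := by
    rw [hg_def]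
    exact ((hf.comp (continuous_const.add continuous_id)).sub continuous_const).mul hLc
  have hgneg : Continuous fun t : ℝ => g (-t) + g t :=
    (hgc.comp continuous_neg).add hgc
  have hsplit : (∫ t in (-Real.pi)..Real.pi, g t)
      = ∫ t in (0:ℝ)..Real.pi, (g (-t) + g t) := by
    have e1 : (∫ t in (-Real.pi)..Real.pi, g t)
        = (∫ t in (-Real.pi)..(0:ℝ), g t) + ∫ t in (0:ℝ)..Real.pi, g t :=
      (intervalIntegral.integral_add_adjacent_intervals (hgc.intervalIntegrable _ _)
        (hgc.intervalIntegrable _ _)).symm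
    have e2 : (∫ t in (0:ℝ)..Real.pi, g (-t)) = ∫ t in (-Real.pi)..(0:ℝ), g t := by
      rw [intervalIntegral.integral_comp_neg g]
      norm_num
    have hgn : IntervalIntegrable (fun t : ℝ => g (-t)) volume 0 Real.pi :=
      (hgc.comp continuous_neg).intervalIntegrable _ _
    rw [e1, ← e2]
    exact (intervalIntegral.integral_add hgn (hgc.intervalIntegrable _ _)).symm
  rw [hsplit]
  -- bound by the modulus of continuity
  have hTf : |(1 / Real.pi) * ∫ t in (0:ℝ)..Real.pi, (g (-t) + g t)|
      ≤ (1 / Real.pi) * ∫ t in (0:ℝ)..Real.pi, 2 * (modulusOfContinuity f t * Lker a n t) := by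
    rw [abs_mul, abs_of_nonneg (by positivity : (0:ℝ) ≤ 1 / Real.pi)]
    refine mul_le_mul_of_nonneg_left ?_ (by positivity)
    refine (intervalIntegral.abs_integral_le_integral_abs hπ.le).trans ?_
    refine intervalIntegral.integral_mono_on hπ.le (hgneg.abs.intervalIntegrable _ _)
      ((hωLint 0 Real.pi).const_mul 2) ?_
    intro t ht
    have hωt : |f (x + t) - f x| ≤ modulusOfContinuity f t := by
      have h := moc_le hM x t
      rwa [abs_of_nonneg ht.1] at h
    have hωt' : |f (x + -t) - f x| ≤ modulusOfContinuity f t := by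
      have h := moc_le hM x (-t)
      rwa [abs_neg, abs_of_nonneg ht.1] at h
    have hgt : |g t| ≤ modulusOfContinuity f t * Lker a n t := by
      rw [hg_def]
      simp only
      rw [abs_mul, abs_of_nonneg (hLnn t)]
      exact mul_le_mul_of_nonneg_right hωt (hLnn t)
    have hgt' : |g (-t)| ≤ modulusOfContinuity f t * Lker a n t := by
      rw [hg_def]
      simp only
      rw [abs_mul, abs_of_nonneg (hLnn (-t)), Lker_even]
      exact mul_le_mul_of_nonneg_right hωt' (hLnn t)
    calc |g (-t) + g t| ≤ |g (-t)| + |g t| := abs_add_le _ _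
      _ ≤ modulusOfContinuity f t * Lker a n t + modulusOfContinuity f t * Lker a n t :=
          add_le_add hgt' hgt
      _ = 2 * (modulusOfContinuity f t * Lker a n t) := by ring
  refine hTf.trans ?_
  -- split the integral at a n 0
  rw [intervalIntegral.integral_const_mul]
  have hsum : (∫ t in (0:ℝ)..Real.pi, modulusOfContinuity f t * Lker a n t)
      = (∫ t in (0:ℝ)..(a n 0), modulusOfContinuity f t * Lker a n t)
        + ∫ t in (a n 0)..Real.pi, modulusOfContinuity f t * Lker a n t :=
    (intervalIntegral.integral_add_adjacent_intervals (hωLint _ _) (hωLint _ _)).symm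
  -- near-zero part
  have hIA : (∫ t in (0:ℝ)..(a n 0), modulusOfContinuity f t * Lker a n t)
      ≤ modulusOfContinuity f (a n 0) * (Real.pi / 2) := by
    have h1 : (∫ t in (0:ℝ)..(a n 0), modulusOfContinuity f t * Lker a n t)
        ≤ ∫ t in (0:ℝ)..(a n 0), modulusOfContinuity f (a n 0) * Lker a n t := by
      refine intervalIntegral.integral_mono_on hA0.le (hωLint _ _)
        ((continuous_const.mul hLc).intervalIntegrable _ _) ?_
      intro t ht
      exact mul_le_mul_of_nonneg_right (hωmono ht.2) (hLnn t)
    have h2 : (∫ t in (0:ℝ)..(a n 0), Lker a n t) ≤ Real.pi / 2 := by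
      have h3 : (∫ t in (0:ℝ)..Real.pi, Lker a n t)
          = (∫ t in (0:ℝ)..(a n 0), Lker a n t) + ∫ t in (a n 0)..Real.pi, Lker a n t :=
        (intervalIntegral.integral_add_adjacent_intervals (hLc.intervalIntegrable _ _)
          (hLc.intervalIntegrable _ _)).symm
      have h4 : 0 ≤ ∫ t in (a n 0)..Real.pi, Lker a n t :=
        intervalIntegral.integral_nonneg hAπ (fun u _ => hLnn u)
      have h5 := integral_Lker a hrow n
      linarith [h3 ▸ h5]
    calc (∫ t in (0:ℝ)..(a n 0), modulusOfContinuity f t * Lker a n t)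
        ≤ ∫ t in (0:ℝ)..(a n 0), modulusOfContinuity f (a n 0) * Lker a n t := h1
      _ = modulusOfContinuity f (a n 0) * ∫ t in (0:ℝ)..(a n 0), Lker a n t :=
          intervalIntegral.integral_const_mul _ _
      _ ≤ modulusOfContinuity f (a n 0) * (Real.pi / 2) :=
          mul_le_mul_of_nonneg_left h2 (hωnn _ hA0.le)
  -- the weighted integral of ω over [a n 0, π]
  have h0mem : (0:ℝ) ∉ Set.uIcc (a n 0) Real.pi := by
    rw [Set.uIcc_of_le hAπ]
    intro hmem
    exact absurd hmem.1 (by linarith)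
  have hcontinv : ContinuousOn (fun t : ℝ => ((t:ℝ) ^ 2)⁻¹) (Set.uIcc (a n 0) Real.pi) := by
    apply ContinuousOn.inv₀ ((continuous_pow 2).continuousOn)
    intro t ht
    rw [Set.uIcc_of_le hAπ] at ht
    have : 0 < t := lt_of_lt_of_le hA0 ht.1
    positivity
  have hintB : IntervalIntegrable (fun t => modulusOfContinuity f t * ((t:ℝ) ^ 2)⁻¹)
      volume (a n 0) Real.pi := (hωint _ _).mul_continuousOn hcontinv
  have hi : (∫ t in (a n 0)..Real.pi, modulusOfContinuity f t * ((t:ℝ) ^ 2)⁻¹)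
      ≤ C₁ * H (a n 0) := by
    have h := hint₁ (a n 0) hA0 hAπ
    have : (∫ t in (a n 0)..Real.pi, modulusOfContinuity f t / t ^ 2)
        = ∫ t in (a n 0)..Real.pi, modulusOfContinuity f t * ((t:ℝ) ^ 2)⁻¹ := by
      refine intervalIntegral.integral_congr fun t _ => ?_
      rw [div_eq_mul_inv]
    rwa [this] at h
  -- estimate ω(a n 0)
  have hz2 : (∫ t in (a n 0)..Real.pi, ((t:ℝ) ^ 2)⁻¹) = 1 / a n 0 - 1 / Real.pi := by
    have hz := integral_zpow (a := a n 0) (b := Real.pi) (n := (-2 : ℤ))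
      (Or.inr ⟨by norm_num, h0mem⟩)
    have he : (∫ t in (a n 0)..Real.pi, ((t:ℝ) ^ 2)⁻¹)
        = ∫ t in (a n 0)..Real.pi, (t:ℝ) ^ (-2 : ℤ) := by
      refine intervalIntegral.integral_congr fun t _ => ?_
      rw [zpow_neg]
      norm_cast
    rw [he, hz]
    norm_num
    ring
  have hω_est : modulusOfContinuity f (a n 0) * (1 / a n 0 - 1 / Real.pi) ≤ C₁ * H (a n 0) := by
    have hcmp : (∫ t in (a n 0)..Real.pi, modulusOfContinuity f (a n 0) * ((t:ℝ) ^ 2)⁻¹)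
        ≤ ∫ t in (a n 0)..Real.pi, modulusOfContinuity f t * ((t:ℝ) ^ 2)⁻¹ := by
      refine intervalIntegral.integral_mono_on hAπ
        ((continuous_const.intervalIntegrable _ _).mul_continuousOn hcontinv) hintB ?_
      intro t ht
      have ht0 : 0 < t := lt_of_lt_of_le hA0 ht.1
      exact mul_le_mul_of_nonneg_right (hωmono ht.1) (by positivity)
    have hval : (∫ t in (a n 0)..Real.pi, modulusOfContinuity f (a n 0) * ((t:ℝ) ^ 2)⁻¹)
        = modulusOfContinuity f (a n 0) * (1 / a n 0 - 1 / Real.pi) := by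
      rw [intervalIntegral.integral_const_mul, hz2]
    linarith [hcmp.trans hi, hval]
  have hω2 : modulusOfContinuity f (a n 0)
      ≤ Real.pi / (Real.pi - 1) * (C₁ * (a n 0 * H (a n 0))) := by
    have e1 : modulusOfContinuity f (a n 0) * (1 / a n 0 - 1 / Real.pi) * (a n 0 * Real.pi)
        = modulusOfContinuity f (a n 0) * (Real.pi - a n 0) := by
      field_simp
    have h9 : modulusOfContinuity f (a n 0) * (Real.pi - a n 0)
        ≤ C₁ * H (a n 0) * (a n 0 * Real.pi) := by
      rw [← e1]
      exact mul_le_mul_of_nonneg_right hω_est (by positivity)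
    have h10 : modulusOfContinuity f (a n 0) * (Real.pi - 1)
        ≤ modulusOfContinuity f (a n 0) * (Real.pi - a n 0) :=
      mul_le_mul_of_nonneg_left (by linarith) (hωnn _ hA0.le)
    rw [div_mul_eq_mul_div, le_div_iff₀ hπ1]
    calc modulusOfContinuity f (a n 0) * (Real.pi - 1)
        ≤ modulusOfContinuity f (a n 0) * (Real.pi - a n 0) := h10
      _ ≤ C₁ * H (a n 0) * (a n 0 * Real.pi) := h9
      _ = Real.pi * (C₁ * (a n 0 * H (a n 0))) := by ring
  -- the tail part
  have hIB : (∫ t in (a n 0)..Real.pi, modulusOfContinuity f t * Lker a n t)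
      ≤ a n 0 * Real.pi ^ 2 / 2 * (C₁ * H (a n 0)) := by
    have h1 : (∫ t in (a n 0)..Real.pi, modulusOfContinuity f t * Lker a n t)
        ≤ ∫ t in (a n 0)..Real.pi,
            (a n 0 * Real.pi ^ 2 / 2) * (modulusOfContinuity f t * ((t:ℝ) ^ 2)⁻¹) := by
      refine intervalIntegral.integral_mono_on hAπ (hωLint _ _) (hintB.const_mul _) ?_
      intro t ht
      have ht0 : 0 < t := lt_of_lt_of_le hA0 ht.1
      have hLle := Lker_le a hnn hmono n ht0 ht.2
      calc modulusOfContinuity f t * Lker a n t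
          ≤ modulusOfContinuity f t * (a n 0 * Real.pi ^ 2 / (2 * t ^ 2)) :=
            mul_le_mul_of_nonneg_left hLle (hωnn t ht0.le)
        _ = (a n 0 * Real.pi ^ 2 / 2) * (modulusOfContinuity f t * ((t:ℝ) ^ 2)⁻¹) := by
            field_simp
    have h2 : (∫ t in (a n 0)..Real.pi,
          (a n 0 * Real.pi ^ 2 / 2) * (modulusOfContinuity f t * ((t:ℝ) ^ 2)⁻¹))
        = (a n 0 * Real.pi ^ 2 / 2)
          * ∫ t in (a n 0)..Real.pi, modulusOfContinuity f t * ((t:ℝ) ^ 2)⁻¹ :=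
      intervalIntegral.integral_const_mul _ _
    calc (∫ t in (a n 0)..Real.pi, modulusOfContinuity f t * Lker a n t) ≤ _ := h1
      _ = _ := h2
      _ ≤ a n 0 * Real.pi ^ 2 / 2 * (C₁ * H (a n 0)) :=
          mul_le_mul_of_nonneg_left hi (by positivity)
  -- assemble
  have hfinal : (1 / Real.pi) * (2 * ((modulusOfContinuity f (a n 0) * (Real.pi / 2))
        + a n 0 * Real.pi ^ 2 / 2 * (C₁ * H (a n 0))))
      = modulusOfContinuity f (a n 0) + Real.pi * (C₁ * (a n 0 * H (a n 0))) := by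
    field_simp
  calc (1 / Real.pi) * (2 * ∫ t in (0:ℝ)..Real.pi, modulusOfContinuity f t * Lker a n t)
      ≤ (1 / Real.pi) * (2 * ((modulusOfContinuity f (a n 0) * (Real.pi / 2))
          + a n 0 * Real.pi ^ 2 / 2 * (C₁ * H (a n 0)))) := by
        rw [hsum]
        have := add_le_add hIA hIB
        gcongr
    _ = modulusOfContinuity f (a n 0) + Real.pi * (C₁ * (a n 0 * H (a n 0))) := hfinal
    _ ≤ Real.pi / (Real.pi - 1) * (C₁ * (a n 0 * H (a n 0)))
          + Real.pi * (C₁ * (a n 0 * H (a n 0))) := by linarith [hω2]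
    _ = C₁ * (Real.pi / (Real.pi - 1) + Real.pi) * (a n 0 * H (a n 0)) := by ring
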